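/- The number of super Dyck paths of order n with exactly k peaks is C(n,k)². -/

import Mathlib

def IsPeakAt (w : List Bool) (i : ℕ) : Prop :=
  w[i]? = some true ∧ w[i + 1]? = some false

namespace SuperDyckAux

/-- structural peak count -/
def pk : List Bool → ℕ
  | [] => 0
  | a :: t => (if a = true ∧ t.head? = some false then 1 else 0) + pk t

lemma pk_false_cons (t : List Bool) : pk (false :: t) = pk t := by simp [pk]

lemma pk_true_cons (t : List Bool) :
    pk (true :: t) = (if t.head? = some false then 1 else 0) + pk t := by simp [pk]

lemma isPeakAt_nil (i : ℕ) : ¬ IsPeakAt [] i := by simp [IsPeakAt]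

lemma isPeakAt_cons_succ (a : Bool) (t : List Bool) (i : ℕ) :
    IsPeakAt (a :: t) (i + 1) ↔ IsPeakAt t i := by simp [IsPeakAt]

lemma isPeakAt_cons_zero (a : Bool) (t : List Bool) :
    IsPeakAt (a :: t) 0 ↔ a = true ∧ t.head? = some false := by
  simp [IsPeakAt, ← List.head?_eq_getElem?]

lemma peakSet_finite (w : List Bool) : {i | IsPeakAt w i}.Finite := by
  apply (Set.finite_Iio w.length).subset
  intro i hi
  have h := hi.1
  rw [List.getElem?_eq_some_iff] at h
  exact h.1

lemma ncard_peaks (w : List Bool) : {i | IsPeakAt w i}.ncard = pk w := by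
  induction w with
  | nil =>
    rw [show {i | IsPeakAt ([] : List Bool) i} = ∅ from
      Set.eq_empty_iff_forall_notMem.2 isPeakAt_nil]
    simp [pk]
  | cons a t ih =>
    have himg : ((· + 1) '' {i | IsPeakAt t i}).ncard = pk t := by
      rw [Set.ncard_image_of_injective _ (add_left_injective 1)]; exact ih
    by_cases h : a = true ∧ t.head? = some false
    · have hset : {i | IsPeakAt (a :: t) i} = insert 0 ((· + 1) '' {i | IsPeakAt t i}) := by
        ext i
        cases i with
        | zero => simp [isPeakAt_cons_zero, h]
        | succ j => simp [isPeakAt_cons_succ]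
      rw [hset, Set.ncard_insert_of_notMem (by simp) ((peakSet_finite t).image _), himg]
      simp [pk, h, Nat.add_comm]
    · have hset : {i | IsPeakAt (a :: t) i} = (· + 1) '' {i | IsPeakAt t i} := by
        ext i
        cases i with
        | zero => simp [isPeakAt_cons_zero, h]
        | succ j => simp [isPeakAt_cons_succ]
      rw [hset, himg]
      simp [pk, h]

lemma natCard_peaks (w : List Bool) : Nat.card {i // IsPeakAt w i} = pk w := by
  rw [show {i // IsPeakAt w i} = {i | IsPeakAt w i} from rfl, Nat.card_coe_set_eq, ncard_peaks]

lemma length_eq_counts (l : List Bool) : l.length = l.count true + l.count false := by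
  induction l with
  | nil => simp
  | cons a t ih =>
    simp only [List.length_cons, List.count_cons, ih]
    cases a <;> simp <;> omega

/-- the main predicate -/
def P (a b k : ℕ) (w : List Bool) : Prop :=
  w.count true = a ∧ w.count false = b ∧ pk w = k

noncomputable def N (a b k : ℕ) : ℕ := {w : List Bool | P a b k w}.ncard

noncomputable def NT (a b k : ℕ) : ℕ :=
  {w : List Bool | P a b k w ∧ w.head? = some true}.ncard

noncomputable def NF (a b k : ℕ) : ℕ :=
  {w : List Bool | P a b k w ∧ w.head? = some false}.ncard

lemma finite_P (a b k : ℕ) : {w : List Bool | P a b k w}.Finite := by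
  apply (List.finite_length_eq Bool (a + b)).subset
  intro w hw
  obtain ⟨h1, h2, _⟩ := hw
  simp only [Set.mem_setOf_eq]
  rw [length_eq_counts, h1, h2]

lemma finite_PQ (a b k : ℕ) (Q : List Bool → Prop) :
    {w : List Bool | P a b k w ∧ Q w}.Finite :=
  (finite_P a b k).subset fun _ hw => hw.1

/-- splitting by head -/
lemma N_split (a b k : ℕ) :
    N a b k = NT a b k + NF a b k + (if a = 0 ∧ b = 0 ∧ k = 0 then 1 else 0) := by
  have hset : {w : List Bool | P a b k w} =
      ({w | P a b k w ∧ w.head? = some true} ∪ {w | P a b k w ∧ w.head? = some false}) ∪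
        {w | P a b k w ∧ w = []} := by
    ext w
    cases w with
    | nil => simp [Set.mem_setOf_eq]
    | cons c t => cases c <;> simp [Set.mem_setOf_eq]
  have hd1 : Disjoint {w : List Bool | P a b k w ∧ w.head? = some true}
      {w : List Bool | P a b k w ∧ w.head? = some false} := by
    rw [Set.disjoint_left]; rintro w ⟨_, h1⟩ ⟨_, h2⟩; rw [h1] at h2; simp at h2
  have hd2 : Disjoint ({w : List Bool | P a b k w ∧ w.head? = some true} ∪
      {w | P a b k w ∧ w.head? = some false}) {w : List Bool | P a b k w ∧ w = []} := by
    rw [Set.disjoint_left]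
    rintro w (⟨_, h1⟩ | ⟨_, h1⟩) ⟨_, h2⟩ <;> subst h2 <;> simp at h1
  have hnil : {w : List Bool | P a b k w ∧ w = []}.ncard =
      (if a = 0 ∧ b = 0 ∧ k = 0 then 1 else 0) := by
    by_cases h : a = 0 ∧ b = 0 ∧ k = 0
    · obtain ⟨rfl, rfl, rfl⟩ := h
      rw [show {w : List Bool | P 0 0 0 w ∧ w = []} = {[]} by
        ext w; simp [P]; rintro rfl; simp [pk]]
      simp
    · rw [show {w : List Bool | P a b k w ∧ w = []} = ∅ by
        ext w; simp only [Set.mem_setOf_eq, Set.mem_empty_iff_false, iff_false, not_and]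
        rintro hP rfl
        obtain ⟨h1, h2, h3⟩ := hP
        exact h ⟨by simpa using h1.symm, by simpa using h2.symm, by simpa [pk] using h3.symm⟩]
      simp [h]
  rw [N, hset, Set.ncard_union_eq hd2 (((finite_PQ a b k _).union (finite_PQ a b k _)))
      (finite_PQ a b k _),
    Set.ncard_union_eq hd1 (finite_PQ a b k _) (finite_PQ a b k _), hnil, NT, NF]

lemma NF_zero (a k : ℕ) : NF a 0 k = 0 := by
  rw [NF, show {w : List Bool | P a 0 k w ∧ w.head? = some false} = ∅ by
    ext w
    simp only [Set.mem_setOf_eq, Set.mem_empty_iff_false, iff_false, not_and]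
    rintro ⟨_, h2, _⟩ hh
    cases w with
    | nil => simp at hh
    | cons c t =>
      simp at hh; subst hh
      simp [List.count_cons] at h2]
  simp

lemma NF_succ (a b k : ℕ) : NF a (b + 1) k = N a b k := by
  rw [NF, N, show {w : List Bool | P a (b + 1) k w ∧ w.head? = some false} =
      (fun t => false :: t) '' {w : List Bool | P a b k w} by
    ext w
    simp only [Set.mem_setOf_eq, Set.mem_image]
    constructor
    · rintro ⟨⟨h1, h2, h3⟩, hh⟩
      cases w with
      | nil => simp at hh
      | cons c t =>
        simp at hh; subst hh
        refine ⟨t, ⟨?_, ?_, ?_⟩, rfl⟩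
        · simpa [List.count_cons] using h1
        · simp [List.count_cons] at h2; omega
        · simpa [pk_false_cons] using h3
    · rintro ⟨t, ⟨h1, h2, h3⟩, rfl⟩
      exact ⟨⟨by simpa [List.count_cons], by simp [List.count_cons]; omega,
        by simpa [pk_false_cons]⟩, rfl⟩]
  exact Set.ncard_image_of_injective _ (fun x y h => by simpa using h)

lemma NT_zero (b k : ℕ) : NT 0 b k = 0 := by
  rw [NT, show {w : List Bool | P 0 b k w ∧ w.head? = some true} = ∅ by
    ext w
    simp only [Set.mem_setOf_eq, Set.mem_empty_iff_false, iff_false, not_and]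
    rintro ⟨h1, _, _⟩ hh
    cases w with
    | nil => simp at hh
    | cons c t =>
      simp at hh; subst hh
      simp [List.count_cons] at h1]
  simp

lemma ncard_nil_set (a b k : ℕ) :
    {w : List Bool | P a b k w ∧ w = []}.ncard = if a = 0 ∧ b = 0 ∧ k = 0 then 1 else 0 := by
  by_cases h : a = 0 ∧ b = 0 ∧ k = 0
  · obtain ⟨rfl, rfl, rfl⟩ := h
    rw [show {w : List Bool | P 0 0 0 w ∧ w = []} = {[]} by
      ext w; simp [P]; rintro rfl; simp [pk]]
    simp
  · rw [show {w : List Bool | P a b k w ∧ w = []} = ∅ by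
      ext w; simp only [Set.mem_setOf_eq, Set.mem_empty_iff_false, iff_false, not_and]
      rintro hP rfl
      obtain ⟨h1, h2, h3⟩ := hP
      exact h ⟨by simpa using h1.symm, by simpa using h2.symm, by simpa [pk] using h3.symm⟩]
    simp [h]

lemma NT_succ (a b k : ℕ) :
    NT (a + 1) b k = (if k = 0 then 0 else NF a b (k - 1)) + NT a b k +
      (if a = 0 ∧ b = 0 ∧ k = 0 then 1 else 0) := by
  have hinj : Function.Injective (fun t : List Bool => true :: t) := fun x y h => by simpa using h
  cases k with
  | zero =>
    have hset : {w : List Bool | P (a + 1) b 0 w ∧ w.head? = some true} =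
        (fun t => true :: t) ''
          ({t | P a b 0 t ∧ t.head? = some true} ∪ {t | P a b 0 t ∧ t = []}) := by
      ext w
      simp only [Set.mem_setOf_eq, Set.mem_image, Set.mem_union]
      constructor
      · rintro ⟨⟨h1, h2, h3⟩, hh⟩
        cases w with
        | nil => simp at hh
        | cons c t =>
          simp at hh; subst hh
          rw [pk_true_cons] at h3
          have hc1 : t.count true = a := by simp [List.count_cons] at h1; omega
          have hc2 : t.count false = b := by simpa [List.count_cons] using h2
          have hhd : ¬ t.head? = some false := by
            intro hf; rw [if_pos hf] at h3; omega
          have hpk : pk t = 0 := by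
            by_cases hf : t.head? = some false
            · exact absurd hf hhd
            · rw [if_neg hf] at h3; omega
          refine ⟨t, ?_, rfl⟩
          cases t with
          | nil => exact Or.inr ⟨⟨hc1, hc2, hpk⟩, rfl⟩
          | cons c' t' =>
            cases c' with
            | false => simp at hhd
            | true => exact Or.inl ⟨⟨hc1, hc2, hpk⟩, by simp⟩
      · rintro ⟨t, (⟨⟨h1, h2, h3⟩, hh⟩ | ⟨⟨h1, h2, h3⟩, hh⟩), rfl⟩
        · refine ⟨⟨by simp [List.count_cons, h1], by simpa [List.count_cons] using h2, ?_⟩, rfl⟩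
          rw [pk_true_cons, hh]
          simp [h3]
        · subst hh
          refine ⟨⟨?_, ?_, ?_⟩, rfl⟩ <;> simp_all [pk]
    have hd : Disjoint {t : List Bool | P a b 0 t ∧ t.head? = some true}
        {t : List Bool | P a b 0 t ∧ t = []} := by
      rw [Set.disjoint_left]; rintro t ⟨_, h1⟩ ⟨_, rfl⟩; simp at h1
    rw [NT, hset, Set.ncard_image_of_injective _ hinj,
      Set.ncard_union_eq hd (finite_PQ a b 0 _) (finite_PQ a b 0 _), ncard_nil_set]
    simp [NT]
  | succ k' =>
    have hset : {w : List Bool | P (a + 1) b (k' + 1) w ∧ w.head? = some true} =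
        (fun t => true :: t) ''
          ({t | P a b k' t ∧ t.head? = some false} ∪
            {t | P a b (k' + 1) t ∧ t.head? = some true}) := by
      ext w
      simp only [Set.mem_setOf_eq, Set.mem_image, Set.mem_union]
      constructor
      · rintro ⟨⟨h1, h2, h3⟩, hh⟩
        cases w with
        | nil => simp at hh
        | cons c t =>
          simp at hh; subst hh
          rw [pk_true_cons] at h3
          have hc1 : t.count true = a := by simp [List.count_cons] at h1; omega
          have hc2 : t.count false = b := by simpa [List.count_cons] using h2
          refine ⟨t, ?_, rfl⟩
          by_cases hf : t.head? = some false
          · rw [if_pos hf] at h3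
            exact Or.inl ⟨⟨hc1, hc2, by omega⟩, hf⟩
          · rw [if_neg hf] at h3
            cases t with
            | nil => simp [pk] at h3
            | cons c' t' =>
              cases c' with
              | false => simp at hf
              | true => exact Or.inr ⟨⟨hc1, hc2, by omega⟩, by simp⟩
      · rintro ⟨t, (⟨⟨h1, h2, h3⟩, hh⟩ | ⟨⟨h1, h2, h3⟩, hh⟩), rfl⟩
        · refine ⟨⟨by simp [List.count_cons, h1], by simpa [List.count_cons] using h2, ?_⟩, rfl⟩
          rw [pk_true_cons, hh]
          simp [h3]
          omega
        · refine ⟨⟨by simp [List.count_cons, h1], by simpa [List.count_cons] using h2, ?_⟩, rfl⟩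
          rw [pk_true_cons, hh]
          simp [h3]
    have hd : Disjoint {t : List Bool | P a b k' t ∧ t.head? = some false}
        {t : List Bool | P a b (k' + 1) t ∧ t.head? = some true} := by
      rw [Set.disjoint_left]; rintro t ⟨_, h1⟩ ⟨_, h2⟩; rw [h1] at h2; simp at h2
    rw [NT, hset, Set.ncard_image_of_injective _ hinj,
      Set.ncard_union_eq hd (finite_PQ a b k' _) (finite_PQ a b (k' + 1) _)]
    simp [NT, NF]

/-- closed form for NT -/
def closedT (a b k : ℕ) : ℕ :=
  if b = 0 then (if k = 0 ∧ a ≠ 0 then 1 else 0)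
  else if k = 0 then 0 else a.choose k * (b - 1).choose (k - 1)

lemma main_count : ∀ (m a b k : ℕ), a + b ≤ m →
    NT a b k = closedT a b k ∧ N a b k = a.choose k * b.choose k := by
  intro m
  induction m with
  | zero =>
    intro a b k h
    obtain ⟨rfl, rfl⟩ : a = 0 ∧ b = 0 := by omega
    refine ⟨by rw [NT_zero]; simp [closedT], ?_⟩
    rw [N_split, NT_zero, NF_zero]
    cases k with
    | zero => simp
    | succ k' => simp
  | succ m ih =>
    intro a b k h
    have hT : NT a b k = closedT a b k := by
      cases a with
      | zero =>
        rw [NT_zero]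
        cases k with
        | zero => by_cases hb : b = 0 <;> simp [closedT, hb]
        | succ k' => by_cases hb : b = 0 <;> simp [closedT, hb]
      | succ a' =>
        have hT' := (ih a' b k (by omega)).1
        rw [NT_succ, hT']
        cases b with
        | zero =>
          cases k with
          | zero =>
            by_cases ha : a' = 0 <;> simp [closedT, NF_zero, ha]
          | succ k' => simp [closedT, NF_zero]
        | succ b' =>
          cases k with
          | zero => simp [closedT]
          | succ k' =>
            have hN' := (ih a' b' k' (by omega)).2
            simp only [Nat.succ_ne_zero, if_false, Nat.add_sub_cancel,
              and_false, false_and, add_zero, NF_succ, hN']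
            simp only [closedT, Nat.succ_ne_zero, if_false, Nat.add_sub_cancel]
            rw [Nat.choose_succ_succ a' k', add_mul]
    refine ⟨hT, ?_⟩
    rw [N_split, hT]
    cases b with
    | zero =>
      rw [NF_zero]
      cases k with
      | zero =>
        cases a with
        | zero => simp [closedT]
        | succ a' => simp [closedT]
      | succ k' => simp [closedT]
    | succ b' =>
      have hN' := (ih a b' k (by omega)).2
      rw [NF_succ, hN']
      cases k with
      | zero => simp [closedT]
      | succ k' =>
        simp only [closedT, Nat.succ_ne_zero, if_false, Nat.add_sub_cancel,
          and_false, false_and, add_zero]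
        rw [Nat.choose_succ_succ b' k', Nat.mul_add]

end SuperDyckAux

open SuperDyckAux in
/-- The number of words with `n` `U`s and `n` `D`s having exactly `k`
occurrences of the factor `UD` is `C(n,k)²`. -/
theorem superDyck_with_k_peaks (n k : ℕ) :
    Nat.card {w : List Bool //
        w.length = 2 * n ∧ w.count true = n ∧
        Nat.card {i : ℕ // IsPeakAt w i} = k} =
      n.choose k ^ 2 := by
  have : Nat.card {w : List Bool // P n n k w} = n.choose k ^ 2 := by
    rw [show {w : List Bool // P n n k w} = {w : List Bool | P n n k w} from rfl,
      Nat.card_coe_set_eq]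
    have := (main_count (n + n) n n k le_rfl).2
    rw [← N, this, sq]
  rw [← this]
  apply Nat.card_congr
  apply Equiv.subtypeEquivRight
  intro w
  have hlen := length_eq_counts w
  rw [natCard_peaks]
  constructor
  · rintro ⟨h1, h2, h3⟩; exact ⟨h2, by omega, h3⟩
  · rintro ⟨h1, h2, h3⟩; exact ⟨by omega, h1, h3⟩
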